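/- arXiv:0706.3558 — 3 statements merged into one kernel-verified Lean document; each statement's English description precedes it below -/
import Mathlib

section
/- Let V_1, …, V_K be independent Exponential random variables with means θ_1, …, θ_K, and define μ_V = 1/(1 + ∑_{i=1}^{K} exp(-(V_1+⋯+V_i))) and μ̄_V = 1/(1 + ∑_{i=1}^{K} exp(-(θ_1+⋯+θ_i))). Then, with σ² = ∑_{i=1}^K θ_i², one has E[μ_V] ≥ e^{-σ²} μ̄_V. -/
open MeasureTheory ProbabilityTheory Finset
open scoped ENNReal NNReal

lemma exponentialPDFReal_eq' (r x : ℝ) :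
    exponentialPDFReal r x = if 0 ≤ x then r * Real.exp (-(r * x)) else 0 := by
  rw [exponentialPDFReal, gammaPDFReal]
  simp only [Real.rpow_one, Real.Gamma_one, div_one, sub_self, Real.rpow_zero, mul_one]

lemma exp_ae_nonneg {r : ℝ} : ∀ᵐ x ∂(expMeasure r), 0 ≤ x := by
  rw [ae_iff]
  have h : {x : ℝ | ¬ 0 ≤ x} = Set.Iio 0 := by ext x; simp [not_le]
  rw [h, expMeasure, gammaMeasure, withDensity_apply _ measurableSet_Iio]
  exact lintegral_gammaPDF_of_nonpos le_rfl

lemma integrable_exp_neg_expMeasure {r : ℝ} (hr : 0 < r) :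
    Integrable (fun x => Real.exp (-x)) (expMeasure r) := by
  have : IsProbabilityMeasure (expMeasure r) := isProbabilityMeasure_expMeasure hr
  refine Integrable.mono' (integrable_const 1)
    (measurable_neg.exp.aestronglyMeasurable) ?_
  filter_upwards [exp_ae_nonneg (r := r)] with x hx
  rw [Real.norm_eq_abs, abs_of_pos (Real.exp_pos _)]
  calc Real.exp (-x) ≤ Real.exp 0 := Real.exp_le_exp.mpr (by linarith)
    _ = 1 := Real.exp_zero

lemma integral_exp_neg_expMeasure {r : ℝ} (hr : 0 < r) :
    ∫ x, Real.exp (-x) ∂(expMeasure r) = r / (r + 1) := by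
  have hpdf : (exponentialPDF r) = fun x => ((exponentialPDFReal r x).toNNReal : ℝ≥0∞) := by
    ext x; simp [exponentialPDF, ENNReal.ofReal]
  rw [show expMeasure r = volume.withDensity (exponentialPDF r) from rfl, hpdf,
    integral_withDensity_eq_integral_smul
      ((measurable_exponentialPDFReal r).real_toNNReal) _]
  have hcong : (fun x : ℝ => (exponentialPDFReal r x).toNNReal • Real.exp (-x))
      = Set.indicator (Set.Ici 0) (fun x => r * Real.exp (-((r+1) * x))) := by
    ext x
    rw [NNReal.smul_def, smul_eq_mul, Real.coe_toNNReal _ (exponentialPDFReal_nonneg hr x),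
      exponentialPDFReal_eq']
    by_cases hx : 0 ≤ x
    · rw [if_pos hx, Set.indicator_of_mem (Set.mem_Ici.mpr hx)]
      rw [mul_assoc, ← Real.exp_add]
      ring_nf
    · rw [if_neg hx, Set.indicator_of_notMem (by simpa using hx), zero_mul]
  rw [hcong, integral_indicator measurableSet_Ici, integral_Ici_eq_integral_Ioi]
  have h01 : (0:ℝ) < r + 1 := by linarith
  have := Real.integral_rpow_mul_exp_neg_mul_Ioi (a := 1) zero_lt_one h01
  simp only [sub_self, Real.rpow_zero, one_mul, Real.rpow_one, Real.Gamma_one, mul_one] at this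
  rw [MeasureTheory.integral_const_mul, this]
  field_simp

lemma inv_one_add_le_exp {θ : ℝ} (h : 0 < θ) : (1 + θ)⁻¹ ≤ Real.exp (θ ^ 2 - θ) := by
  have h1 : (0:ℝ) < 1 + θ := by linarith
  rw [inv_eq_one_div, div_le_iff₀ h1]
  nlinarith [Real.add_one_le_exp (θ ^ 2 - θ), pow_pos h 3,
    mul_le_mul_of_nonneg_right (Real.add_one_le_exp (θ ^ 2 - θ)) h1.le]

lemma tangent_ineq {m x : ℝ} (hm : 0 ≤ m) (hx : 0 ≤ x) :
    (1 + m)⁻¹ - (x - m) / (1 + m) ^ 2 ≤ (1 + x)⁻¹ := by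
  have h1 : (0:ℝ) < 1 + x := by linarith
  have h2 : (0:ℝ) < 1 + m := by linarith
  rw [← sub_nonneg]
  have key : (1 + x)⁻¹ - ((1 + m)⁻¹ - (x - m) / (1 + m) ^ 2)
      = (x - m) ^ 2 / ((1 + x) * (1 + m) ^ 2) := by
    field_simp
    ring
  rw [key]
  positivity


/-- Jensen lower bound: for independent Exponentials `V i` with means `θ i`,
`E[μ_V] ≥ exp(-σ²) μ̄_V` where `σ² = ∑ θ i ^ 2`. -/
theorem expectation_muV_ge
    {Ω : Type*} [MeasurableSpace Ω] (P : Measure Ω) [IsProbabilityMeasure P]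
    (K : ℕ) (hK : 0 < K) (V : Fin K → Ω → ℝ) (hmeas : ∀ i, Measurable (V i))
    (θ : Fin K → ℝ) (hθ : ∀ i, 0 < θ i)
    (hindep : iIndepFun V P)
    (hdist : ∀ i, Measure.map (V i) P = expMeasure (θ i)⁻¹) :
    Real.exp (-(∑ i, θ i ^ 2)) *
        (1 + ∑ i, Real.exp (-(∑ j ∈ Finset.Iic i, θ j)))⁻¹ ≤
      ∫ ω, (1 + ∑ i, Real.exp (-(∑ j ∈ Finset.Iic i, V j ω)))⁻¹ ∂P := by
  classical
  set σ2 : ℝ := ∑ i, θ i ^ 2 with hσ2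
  have hσ2_nonneg : 0 ≤ σ2 := Finset.sum_nonneg fun i _ => sq_nonneg _
  -- measurability of terms
  have hT_meas : ∀ i : Fin K,
      Measurable fun ω => Real.exp (-(∑ j ∈ Finset.Iic i, V j ω)) :=
    fun i => ((Finset.measurable_sum _ fun j _ => hmeas j).neg).exp
  -- integrability of each factor
  have hfac_int : ∀ j : Fin K, Integrable (fun ω => Real.exp (-1 * V j ω)) P := by
    intro j
    have h : Integrable ((fun x => Real.exp (-x)) ∘ V j) P := by
      rw [← integrable_map_measure measurable_neg.exp.aestronglyMeasurable
        (hmeas j).aemeasurable, hdist j]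
      exact integrable_exp_neg_expMeasure (inv_pos.mpr (hθ j))
    simpa [Function.comp_def, neg_one_mul] using h
  -- integrability of each term
  have hT_int : ∀ i : Fin K,
      Integrable (fun ω => Real.exp (-(∑ j ∈ Finset.Iic i, V j ω))) P := by
    intro i
    have h := hindep.integrable_exp_mul_sum hmeas
      (t := -1) (s := Finset.Iic i) (fun j _ => hfac_int j)
    simp only [Finset.sum_apply, neg_one_mul] at h
    exact h
  -- value of each factor's mgf
  have hmgf : ∀ j : Fin K, mgf (V j) P (-1) = (1 + θ j)⁻¹ := by
    intro j
    have hθj := hθ j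
    have hθj' : θ j ≠ 0 := hθj.ne'
    rw [mgf]
    simp_rw [neg_one_mul]
    have hmap := integral_map (μ := P) (φ := V j) (hmeas j).aemeasurable
      (f := fun x => Real.exp (-x)) measurable_neg.exp.aestronglyMeasurable
    rw [hdist j, integral_exp_neg_expMeasure (inv_pos.mpr hθj)] at hmap
    rw [← hmap, div_eq_iff (by positivity)]
    field_simp
  -- value of each term's integral
  have hT_val : ∀ i : Fin K,
      ∫ ω, Real.exp (-(∑ j ∈ Finset.Iic i, V j ω)) ∂P
        = ∏ j ∈ Finset.Iic i, (1 + θ j)⁻¹ := by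
    intro i
    have h := hindep.mgf_sum hmeas (t := -1) (Finset.Iic i)
    rw [mgf] at h
    simp only [Finset.sum_apply, neg_one_mul] at h
    exact h.trans (Finset.prod_congr rfl fun j _ => hmgf j)
  set S : Ω → ℝ := fun ω => ∑ i, Real.exp (-(∑ j ∈ Finset.Iic i, V j ω)) with hS
  set m : ℝ := ∑ i : Fin K, ∏ j ∈ Finset.Iic i, (1 + θ j)⁻¹ with hm
  have hS_int : Integrable S P := integrable_finset_sum _ fun i _ => hT_int i
  have hS_val : ∫ ω, S ω ∂P = m := by
    rw [hS]
    rw [integral_finset_sum _ fun i _ => hT_int i]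
    exact Finset.sum_congr rfl fun i _ => hT_val i
  have hS_nonneg : ∀ ω, 0 ≤ S ω := fun ω =>
    Finset.sum_nonneg fun i _ => (Real.exp_pos _).le
  have hm_nonneg : 0 ≤ m :=
    Finset.sum_nonneg fun i _ => Finset.prod_nonneg fun j _ => inv_nonneg.mpr (by have := hθ j; linarith)
  have h1m : (0:ℝ) < 1 + m := by linarith
  -- integrability of the target
  have hf_int : Integrable (fun ω => (1 + S ω)⁻¹) P := by
    refine Integrable.mono' (integrable_const 1) ?_ (ae_of_all _ fun ω => ?_)
    · exact ((measurable_const.add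
        (Finset.measurable_sum _ fun i _ => hT_meas i)).inv).aestronglyMeasurable
    · have h0 : (0:ℝ) < 1 + S ω := by have := hS_nonneg ω; linarith
      rw [Real.norm_eq_abs, abs_of_pos (inv_pos.mpr h0)]
      exact inv_le_one_of_one_le₀ (by have := hS_nonneg ω; linarith)
  -- Jensen step
  have hJensen : (1 + m)⁻¹ ≤ ∫ ω, (1 + S ω)⁻¹ ∂P := by
    have hg_int : Integrable (fun ω => (S ω - m)/(1+m)^2) P :=
      (hS_int.sub (integrable_const m)).div_const _
    have hlin_int : Integrable (fun ω => (1+m)⁻¹ - (S ω - m)/(1+m)^2) P :=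
      (integrable_const _).sub hg_int
    have hmono := integral_mono hlin_int hf_int
      (fun ω => tangent_ineq hm_nonneg (hS_nonneg ω))
    calc (1+m)⁻¹ = ∫ ω, ((1+m)⁻¹ - (S ω - m)/(1+m)^2) ∂P := by
          rw [integral_sub (integrable_const _) hg_int,
            integral_div, integral_sub hS_int (integrable_const _), hS_val,
            integral_const, integral_const]
          simp
      _ ≤ _ := hmono
  set M : ℝ := ∑ i : Fin K, Real.exp (-(∑ j ∈ Finset.Iic i, θ j)) with hM
  have hM_nonneg : 0 ≤ M := Finset.sum_nonneg fun i _ => (Real.exp_pos _).le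
  have hmM : m ≤ Real.exp σ2 * M := by
    rw [hm, hM, Finset.mul_sum]
    refine Finset.sum_le_sum fun i _ => ?_
    calc ∏ j ∈ Finset.Iic i, (1+θ j)⁻¹
        ≤ ∏ j ∈ Finset.Iic i, Real.exp (θ j ^ 2 - θ j) :=
          Finset.prod_le_prod (fun j _ => inv_nonneg.mpr (by have := hθ j; linarith))
            (fun j _ => inv_one_add_le_exp (hθ j))
      _ = Real.exp (∑ j ∈ Finset.Iic i, (θ j ^ 2 - θ j)) := (Real.exp_sum _ _).symm
      _ ≤ Real.exp (σ2 - ∑ j ∈ Finset.Iic i, θ j) := by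
          apply Real.exp_le_exp.mpr
          rw [Finset.sum_sub_distrib]
          have hsub : ∑ j ∈ Finset.Iic i, θ j ^ 2 ≤ σ2 :=
            Finset.sum_le_sum_of_subset_of_nonneg (Finset.subset_univ _)
              (fun j _ _ => sq_nonneg _)
          linarith
      _ = Real.exp σ2 * Real.exp (-(∑ j ∈ Finset.Iic i, θ j)) := by
          rw [← Real.exp_add]; ring_nf
  have hfinal : Real.exp (-σ2) * (1 + M)⁻¹ ≤ (1 + m)⁻¹ := by
    have hE1 : (1:ℝ) ≤ Real.exp σ2 := Real.one_le_exp hσ2_nonneg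
    have hle : 1 + m ≤ Real.exp σ2 * (1 + M) := by nlinarith
    calc Real.exp (-σ2) * (1+M)⁻¹ = (Real.exp σ2 * (1+M))⁻¹ := by
          rw [mul_inv, Real.exp_neg]
      _ ≤ (1+m)⁻¹ := by
          apply inv_anti₀ h1m hle
  exact hfinal.trans hJensen
end

section
/- Let V_1, …, V_K be independent Exponential random variables with means θ_1, …, θ_K, let σ = (∑ θ_i²)^{1/2}, and define the martingale M_i = ∑_{j=1}^i (V_j - θ_j). Then E[exp(M_K/(2σ))] ≤ e^{1/4}. -/
open MeasureTheory ProbabilityTheory Finset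

lemma inv_div_inv_sub {a b : ℝ} (ha : a ≠ 0) (hb : 1 - b * a ≠ 0) :
    a⁻¹ / (a⁻¹ - b) = (1 - b * a)⁻¹ := by
  rw [eq_comm, inv_eq_one_div, div_eq_div_iff]
  · field_simp
  · exact hb
  · rw [sub_ne_zero]
    intro h
    apply hb
    rw [← h]
    field_simp
    ring

lemma integral_exp_expMeasure {r t : ℝ} (hr : 0 < r) (ht : t < r) :
    ∫ x, Real.exp (t * x) ∂(expMeasure r) = r / (r - t) := by
  have hrt : (0:ℝ) < r - t := sub_pos.2 ht
  have hmeas : Measurable fun x : ℝ => Real.exp (t * x) :=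
    (measurable_id.const_mul t).exp
  rw [integral_eq_lintegral_of_nonneg_ae (ae_of_all _ fun x => (Real.exp_pos _).le)
    hmeas.aestronglyMeasurable]
  have hpdfmeas : ∀ a : ℝ, Measurable (exponentialPDF a) := fun a =>
    (measurable_exponentialPDFReal a).ennreal_ofReal
  have hlin : ∫⁻ x, ENNReal.ofReal (Real.exp (t * x)) ∂(expMeasure r)
      = ENNReal.ofReal (r / (r - t)) := by
    rw [expMeasure, gammaMeasure, show gammaPDF 1 r = exponentialPDF r from rfl,
      lintegral_withDensity_eq_lintegral_mul _ (hpdfmeas r) (hmeas.ennreal_ofReal)]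
    have hpt : ∀ x : ℝ, (exponentialPDF r * fun x => ENNReal.ofReal (Real.exp (t * x))) x
        = ENNReal.ofReal (r / (r - t)) * exponentialPDF (r - t) x := by
      intro x
      rcases lt_or_ge x 0 with hx | hx
      · simp [exponentialPDF_of_neg hx]
      · simp only [Pi.mul_apply, exponentialPDF_of_nonneg hx]
        rw [← ENNReal.ofReal_mul (by positivity), ← ENNReal.ofReal_mul (by positivity)]
        congr 1
        rw [mul_assoc, ← Real.exp_add, show -(r * x) + t * x = -((r - t) * x) by ring,
          ← mul_assoc, div_mul_cancel₀ r hrt.ne']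
    rw [lintegral_congr hpt, lintegral_const_mul _ (hpdfmeas (r - t)),
      lintegral_exponentialPDF_eq_one hrt, mul_one]
  rw [hlin, ENNReal.toReal_ofReal (by positivity)]

lemma exp_neg_add_sq_le {x : ℝ} (h0 : 0 ≤ x) (h2 : x ≤ 1/2) :
    Real.exp (-(x + x ^ 2)) ≤ 1 - x := by
  have h := Real.quadratic_le_exp_of_nonneg (show (0:ℝ) ≤ x + x ^ 2 by positivity)
  have hkey : 1 ≤ (1 - x) * Real.exp (x + x ^ 2) := by nlinarith [sq_nonneg x, sq_nonneg (x^2)]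
  have hmul : Real.exp (-(x + x ^ 2)) * Real.exp (x + x ^ 2) = 1 := by
    rw [← Real.exp_add, show -(x + x ^ 2) + (x + x ^ 2) = 0 by ring, Real.exp_zero]
  nlinarith [Real.exp_pos (x + x ^ 2)]

/-- MGF bound for the centered sum of independent Exponentials:
with `σ = (∑ θ i ^ 2)^{1/2}` and `M_K = ∑ i (V i - θ i)`,
`E[exp(M_K/(2σ))] ≤ e^{1/4}`. -/
theorem mgf_centered_exponential_sum_le
    {Ω : Type*} [MeasurableSpace Ω] (P : Measure Ω) [IsProbabilityMeasure P]
    (K : ℕ) (hK : 0 < K) (V : Fin K → Ω → ℝ) (hmeas : ∀ i, Measurable (V i))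
    (θ : Fin K → ℝ) (hθ : ∀ i, 0 < θ i)
    (hindep : iIndepFun V P)
    (hdist : ∀ i, Measure.map (V i) P = expMeasure (θ i)⁻¹) :
    ∫ ω, Real.exp ((∑ i, (V i ω - θ i)) / (2 * Real.sqrt (∑ i, θ i ^ 2))) ∂P ≤
      Real.exp (1 / 4) := by
  have hne : Nonempty (Fin K) := Fin.pos_iff_nonempty.1 hK
  have hs : (0:ℝ) < ∑ i, θ i ^ 2 :=
    Finset.sum_pos (fun i _ => pow_pos (hθ i) 2) Finset.univ_nonempty
  set s : ℝ := ∑ i, θ i ^ 2 with hsdef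
  set σ : ℝ := Real.sqrt s with hσdef
  have hσ : 0 < σ := Real.sqrt_pos.2 hs
  have hσ2 : σ ^ 2 = s := Real.sq_sqrt hs.le
  set t : ℝ := (2 * σ)⁻¹ with htdef
  have ht : 0 < t := by positivity
  have hθσ : ∀ i, θ i ≤ σ := by
    intro i
    calc θ i = Real.sqrt (θ i ^ 2) := (Real.sqrt_sq (hθ i).le).symm
      _ ≤ σ := Real.sqrt_le_sqrt (Finset.single_le_sum (fun j _ => sq_nonneg (θ j))
          (Finset.mem_univ i))
  have hx : ∀ i, t * θ i ≤ 1/2 := by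
    intro i
    calc t * θ i ≤ t * σ := by nlinarith [hθσ i]
      _ = 1/2 := by rw [htdef, mul_inv, mul_assoc, inv_mul_cancel₀ hσ.ne', mul_one, one_div]
  have hx0 : ∀ i, 0 < t * θ i := fun i => mul_pos ht (hθ i)
  have h1x : ∀ i, 0 < 1 - t * θ i := fun i => by linarith [hx i]
  have ht_lt : ∀ i, t < (θ i)⁻¹ := by
    intro i
    rw [← one_div, lt_div_iff₀ (hθ i)]
    linarith [hx i]
  -- mgf of each V i
  have hmgf : ∀ i, (∫ ω, Real.exp (t * V i ω) ∂P) = (1 - t * θ i)⁻¹ := by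
    intro i
    have hm : AEStronglyMeasurable (fun x : ℝ => Real.exp (t * x)) (Measure.map (V i) P) :=
      Measurable.aestronglyMeasurable (by fun_prop)
    have : (∫ ω, Real.exp (t * V i ω) ∂P) = ∫ x, Real.exp (t * x) ∂(Measure.map (V i) P) :=
      (integral_map (hmeas i).aemeasurable hm).symm
    rw [this, hdist i, integral_exp_expMeasure (inv_pos.2 (hθ i)) (ht_lt i)]
    exact inv_div_inv_sub (hθ i).ne' (h1x i).ne'
  -- rewrite integrand
  have hrw : ∀ ω, Real.exp ((∑ i, (V i ω - θ i)) / (2 * σ))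
      = Real.exp (-(t * ∑ i, θ i)) * Real.exp (t * (∑ i, V i) ω) := by
    intro ω
    rw [← Real.exp_add, Finset.sum_sub_distrib, Finset.sum_apply]
    congr 1
    rw [htdef, div_eq_mul_inv]
    ring
  calc ∫ ω, Real.exp ((∑ i, (V i ω - θ i)) / (2 * σ)) ∂P
      = ∫ ω, Real.exp (-(t * ∑ i, θ i)) * Real.exp (t * (∑ i, V i) ω) ∂P := by
        exact integral_congr_ae (ae_of_all _ fun ω => hrw ω)
    _ = Real.exp (-(t * ∑ i, θ i)) * mgf (∑ i, V i) P t := by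
        rw [integral_const_mul]; rfl
    _ = Real.exp (-(t * ∑ i, θ i)) * ∏ i, mgf (V i) P t := by
        rw [hindep.mgf_sum hmeas]
    _ = ∏ i, Real.exp (-(t * θ i)) * (1 - t * θ i)⁻¹ := by
        rw [Finset.prod_mul_distrib, ← Real.exp_sum]
        congr 1
        · congr 1
          rw [Finset.mul_sum]
          simp
        · exact Finset.prod_congr rfl fun i _ => hmgf i
    _ ≤ ∏ i, Real.exp ((t * θ i) ^ 2) := by
        apply Finset.prod_le_prod
        · intro i _
          exact mul_nonneg (Real.exp_pos _).le (inv_nonneg.2 (h1x i).le)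
        · intro i _
          have hb := exp_neg_add_sq_le (hx0 i).le (hx i)
          have hgoal : Real.exp (-(t * θ i)) ≤ (1 - t * θ i) * Real.exp ((t * θ i) ^ 2) := by
            calc Real.exp (-(t * θ i))
                = Real.exp (-(t * θ i + (t * θ i) ^ 2)) * Real.exp ((t * θ i) ^ 2) := by
                  rw [← Real.exp_add]; congr 1; ring
              _ ≤ (1 - t * θ i) * Real.exp ((t * θ i) ^ 2) :=
                  mul_le_mul_of_nonneg_right hb (Real.exp_pos _).le
          calc Real.exp (-(t * θ i)) * (1 - t * θ i)⁻¹
              ≤ ((1 - t * θ i) * Real.exp ((t * θ i) ^ 2)) * (1 - t * θ i)⁻¹ :=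
                mul_le_mul_of_nonneg_right hgoal (inv_nonneg.2 (h1x i).le)
            _ = Real.exp ((t * θ i) ^ 2) := by
                rw [mul_comm (1 - t * θ i) _, mul_assoc, mul_inv_cancel₀ (h1x i).ne', mul_one]
    _ = Real.exp (1/4) := by
        rw [← Real.exp_sum]
        congr 1
        have : ∑ i, (t * θ i) ^ 2 = t ^ 2 * s := by
          rw [hsdef, Finset.mul_sum]
          exact Finset.sum_congr rfl fun i _ => by ring
        rw [this, htdef, ← hσ2]
        have hσne : σ ≠ 0 := hσ.ne'
        field_simp
        ring
end

section
/- Let (Y_j)_{j≥1} be nonnegative real numbers, γ' ∈ (0,1), and for n ≥ 2 define μ_1(n) = 1/(1 + ∑_{i=1}^{n-1} exp(−∑_{j=1}^i Y_j)) and μ_1'(n) = 1/(1 + ∑_{i=1}^{⌊γ' n⌋} exp(−∑_{j=1}^i Y_j)). Then |log μ_1(n) − log μ_1'(n)| ≤ (1 − γ')/γ'. -/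
open Finset

/-- Deterministic truncation estimate: for nonnegative `Y_j`, `γ' ∈ (0,1)` and `n ≥ 2`,
with `μ₁(n) = (1 + ∑_{i=1}^{n-1} exp(−∑_{j=1}^i Y_j))⁻¹` and
`μ₁'(n) = (1 + ∑_{i=1}^{⌊γ' n⌋} exp(−∑_{j=1}^i Y_j))⁻¹`,
one has `|log μ₁(n) − log μ₁'(n)| ≤ (1 − γ')/γ'`. -/
theorem log_mu_truncation_bound (Y : ℕ → ℝ) (hY : ∀ j, 0 ≤ Y j)
    (γ' : ℝ) (hγ0 : 0 < γ') (hγ1 : γ' < 1) (n : ℕ) (hn : 2 ≤ n) :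
    |Real.log (1 + ∑ i ∈ Finset.Icc 1 (n - 1),
          Real.exp (-(∑ j ∈ Finset.Icc 1 i, Y j)))⁻¹ -
        Real.log (1 + ∑ i ∈ Finset.Icc 1 (Nat.floor (γ' * n)),
          Real.exp (-(∑ j ∈ Finset.Icc 1 i, Y j)))⁻¹| ≤
      (1 - γ') / γ' := by
  set m := Nat.floor (γ' * n) with hm
  set A : ℕ → ℝ := fun i => ∑ j ∈ Finset.Icc 1 i, Y j with hA
  set f : ℕ → ℝ := fun i => Real.exp (-(A i)) with hf
  have hn0 : (0:ℝ) < n := by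
    have : 0 < n := lt_of_lt_of_le (by norm_num) hn
    exact_mod_cast this
  have hmn : m < n := by
    have h1 : γ' * n < n := by nlinarith
    exact_mod_cast (Nat.floor_lt (le_of_lt (mul_pos hγ0 hn0))).mpr h1
  have hmn1 : m ≤ n - 1 := by omega
  have hA_mono : Monotone A := fun i i' h =>
    Finset.sum_le_sum_of_subset_of_nonneg (Finset.Icc_subset_Icc_right h)
      (fun j _ _ => hY j)
  have hA_nonneg : ∀ i, 0 ≤ A i := fun i => Finset.sum_nonneg fun j _ => hY j
  have hf_pos : ∀ i, 0 < f i := fun i => Real.exp_pos _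
  have hf_le_one : ∀ i, f i ≤ 1 := fun i =>
    Real.exp_le_one_iff.mpr (by linarith [hA_nonneg i])
  -- rewrite Icc 1 k as Ioc 0 k
  have hIcc : ∀ k : ℕ, Finset.Icc 1 k = Finset.Ioc 0 k := fun k => by
    rw [← Finset.Icc_add_one_left_eq_Ioc]
    rfl
  set S : ℕ → ℝ := fun k => ∑ i ∈ Finset.Ioc 0 k, f i with hS
  have hSnonneg : ∀ k, 0 ≤ S k := fun k => Finset.sum_nonneg fun i _ => (hf_pos i).le
  have hpos : ∀ k, (0:ℝ) < 1 + S k := fun k => by linarith [hSnonneg k]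
  have hsplit : S m + ∑ i ∈ Finset.Ioc m (n-1), f i = S (n-1) :=
    Finset.sum_Ioc_consecutive f (Nat.zero_le m) hmn1
  set T : ℝ := ∑ i ∈ Finset.Ioc m (n-1), f i with hT
  have hT_nonneg : 0 ≤ T := Finset.sum_nonneg fun i _ => (hf_pos i).le
  have hSS : S m ≤ S (n-1) := by linarith
  -- bound T
  have hT_le : T ≤ ((n - 1 - m : ℕ) : ℝ) * f m := by
    have h1 : T ≤ (Finset.Ioc m (n-1)).card • f m :=
      Finset.sum_le_card_nsmul _ _ _ (fun i hi => by
        have : m ≤ i := (Finset.mem_Ioc.mp hi).1.le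
        exact Real.exp_le_exp.mpr (by linarith [hA_mono this]))
    simpa [Nat.card_Ioc, nsmul_eq_mul] using h1
  -- lower bound for 1 + S m
  have hB_ge : ((m:ℝ) + 1) * f m ≤ 1 + S m := by
    have h1 : (Finset.Ioc 0 m).card • f m ≤ S m :=
      Finset.card_nsmul_le_sum _ _ _ (fun i hi => by
        have : i ≤ m := (Finset.mem_Ioc.mp hi).2
        exact Real.exp_le_exp.mpr (by linarith [hA_mono this]))
    have h2 : ((m:ℝ)) * f m ≤ S m := by
      simpa [Nat.card_Ioc, nsmul_eq_mul] using h1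
    have := hf_le_one m
    nlinarith
  -- main chain
  have key : Real.log (1 + S (n-1)) - Real.log (1 + S m) ≤ (1 - γ') / γ' := by
    have hlog : Real.log (1 + S (n-1)) - Real.log (1 + S m)
        = Real.log ((1 + S (n-1)) / (1 + S m)) :=
      (Real.log_div (hpos _).ne' (hpos m).ne').symm
    rw [hlog]
    have h1 : Real.log ((1 + S (n-1)) / (1 + S m)) ≤ (1 + S (n-1)) / (1 + S m) - 1 :=
      Real.log_le_sub_one_of_pos (div_pos (hpos _) (hpos m))
    have h2 : (1 + S (n-1)) / (1 + S m) - 1 = T / (1 + S m) := by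
      field_simp [(hpos m).ne']
      linarith
    have h3 : T / (1 + S m) ≤ (((n - 1 - m : ℕ) : ℝ) * f m) / (((m:ℝ) + 1) * f m) :=
      div_le_div₀ (by positivity) hT_le (by positivity) hB_ge
    have h4 : (((n - 1 - m : ℕ) : ℝ) * f m) / (((m:ℝ) + 1) * f m)
        = ((n - 1 - m : ℕ) : ℝ) / ((m:ℝ) + 1) :=
      mul_div_mul_right _ _ (hf_pos m).ne'
    have h5 : ((n - 1 - m : ℕ) : ℝ) / ((m:ℝ) + 1) ≤ (1 - γ') / γ' := by
      rw [div_le_div_iff₀ (by positivity) hγ0]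
      have hfl : γ' * n < (m:ℝ) + 1 := Nat.lt_floor_add_one (γ' * n)
      have hcast : ((n - 1 - m : ℕ) : ℝ) = (n:ℝ) - 1 - m := by
        have : 1 + m ≤ n := by omega
        push_cast [Nat.sub_sub]
        rw [Nat.cast_sub this]
        push_cast; ring
      rw [hcast]
      nlinarith
    linarith
  -- conclude
  have hgoal : ∀ k : ℕ, (∑ i ∈ Finset.Icc 1 k,
      Real.exp (-(∑ j ∈ Finset.Icc 1 i, Y j))) = S k := fun k => by
    rw [hIcc k]
  rw [hgoal, hgoal, Real.log_inv, Real.log_inv]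
  have hle : Real.log (1 + S m) ≤ Real.log (1 + S (n-1)) :=
    Real.log_le_log (hpos m) (by linarith)
  rw [abs_le]
  constructor
  · have : -((1 - γ') / γ') ≤ 0 := by
      have : 0 ≤ (1 - γ') / γ' := div_nonneg (by linarith) hγ0.le
      linarith
    linarith
  · linarith
end
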